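/- Let H₀, H₁ be complex Hilbert spaces and L ∈ B(H₀; H₁). Then the block operator V_L := [[(I + L*L)^{-1/2}, −L*(I + LL*)^{-1/2}], [L(I + L*L)^{-1/2}, (I + LL*)^{-1/2}]] on the Hilbert direct sum H₀ ⊕ H₁ is unitary, where (I + L*L)^{-1/2} and (I + LL*)^{-1/2} are the inverse square roots of the positive invertible operators I + L*L and I + LL*, given by the continuous functional calculus (i.e. by applying the continuous function x ↦ (1 + x)^{-1/2} to L*L and LL* respectively). -/

import Mathlib

set_option linter.unusedSectionVars false


open ContinuousLinearMap

noncomputable section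

variable (H₀ H₁ : Type*) [NormedAddCommGroup H₀] [InnerProductSpace ℂ H₀] [CompleteSpace H₀]
  [NormedAddCommGroup H₁] [InnerProductSpace ℂ H₁] [CompleteSpace H₁]

/-- The inclusion `H₀ → H₀ ⊕ H₁` (Hilbert-space direct sum). -/
def inl0 : H₀ →L[ℂ] WithLp 2 (H₀ × H₁) :=
  ((WithLp.prodContinuousLinearEquiv 2 ℂ H₀ H₁).symm : H₀ × H₁ →L[ℂ] WithLp 2 (H₀ × H₁)) ∘L
    ContinuousLinearMap.inl ℂ H₀ H₁

/-- The inclusion `H₁ → H₀ ⊕ H₁`. -/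
def inr1 : H₁ →L[ℂ] WithLp 2 (H₀ × H₁) :=
  ((WithLp.prodContinuousLinearEquiv 2 ℂ H₀ H₁).symm : H₀ × H₁ →L[ℂ] WithLp 2 (H₀ × H₁)) ∘L
    ContinuousLinearMap.inr ℂ H₀ H₁

/-- The projection `H₀ ⊕ H₁ → H₀`. -/
def fst0 : WithLp 2 (H₀ × H₁) →L[ℂ] H₀ :=
  ContinuousLinearMap.fst ℂ H₀ H₁ ∘L
    ((WithLp.prodContinuousLinearEquiv 2 ℂ H₀ H₁) : WithLp 2 (H₀ × H₁) →L[ℂ] H₀ × H₁)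

/-- The projection `H₀ ⊕ H₁ → H₁`. -/
def snd1 : WithLp 2 (H₀ × H₁) →L[ℂ] H₁ :=
  ContinuousLinearMap.snd ℂ H₀ H₁ ∘L
    ((WithLp.prodContinuousLinearEquiv 2 ℂ H₀ H₁) : WithLp 2 (H₀ × H₁) →L[ℂ] H₀ × H₁)

lemma p0i0 : fst0 H₀ H₁ ∘L inl0 H₀ H₁ = ContinuousLinearMap.id ℂ H₀ := by
  ext x; simp [fst0, inl0]

lemma p0i1 : fst0 H₀ H₁ ∘L inr1 H₀ H₁ = 0 := by
  ext x; simp [fst0, inr1]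

lemma p1i0 : snd1 H₀ H₁ ∘L inl0 H₀ H₁ = 0 := by
  ext x; simp [snd1, inl0]

lemma p1i1 : snd1 H₀ H₁ ∘L inr1 H₀ H₁ = ContinuousLinearMap.id ℂ H₁ := by
  ext x; simp [snd1, inr1]

lemma decomp : inl0 H₀ H₁ ∘L fst0 H₀ H₁ + inr1 H₀ H₁ ∘L snd1 H₀ H₁ = 1 := by
  ext x
  apply (WithLp.prodContinuousLinearEquiv 2 ℂ H₀ H₁).injective
  simp [inl0, inr1, fst0, snd1]
  rfl

lemma adj_inl0 : adjoint (inl0 H₀ H₁) = fst0 H₀ H₁ := by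
  symm
  rw [eq_adjoint_iff]
  intro x y
  simp [fst0, inl0, WithLp.prod_inner_apply]

lemma adj_inr1 : adjoint (inr1 H₀ H₁) = snd1 H₀ H₁ := by
  symm
  rw [eq_adjoint_iff]
  intro x y
  simp [snd1, inr1, WithLp.prod_inner_apply]

lemma adj_fst0 : adjoint (fst0 H₀ H₁) = inl0 H₀ H₁ := by
  rw [← adj_inl0, adjoint_adjoint]

lemma adj_snd1 : adjoint (snd1 H₀ H₁) = inr1 H₀ H₁ := by
  rw [← adj_inr1, adjoint_adjoint]

variable {H₀ H₁}

/-- The block operator `[[A, C], [B, D]]` on `H₀ ⊕ H₁`. -/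
def blk (A : H₀ →L[ℂ] H₀) (C : H₁ →L[ℂ] H₀) (B : H₀ →L[ℂ] H₁) (D : H₁ →L[ℂ] H₁) :
    WithLp 2 (H₀ × H₁) →L[ℂ] WithLp 2 (H₀ × H₁) :=
  inl0 H₀ H₁ ∘L A ∘L fst0 H₀ H₁ + inl0 H₀ H₁ ∘L C ∘L snd1 H₀ H₁ +
    inr1 H₀ H₁ ∘L B ∘L fst0 H₀ H₁ + inr1 H₀ H₁ ∘L D ∘L snd1 H₀ H₁

lemma blk_comp_blk (A A' : H₀ →L[ℂ] H₀) (C C' : H₁ →L[ℂ] H₀) (B B' : H₀ →L[ℂ] H₁)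
    (D D' : H₁ →L[ℂ] H₁) :
    blk A C B D ∘L blk A' C' B' D' =
      blk (A ∘L A' + C ∘L B') (A ∘L C' + C ∘L D') (B ∘L A' + D ∘L B') (B ∘L C' + D ∘L D') := by
  simp only [blk, add_comp, comp_add, comp_assoc, ← comp_assoc (fst0 H₀ H₁),
    ← comp_assoc (snd1 H₀ H₁), p0i0, p0i1, p1i0, p1i1, id_comp, zero_comp, comp_zero,
    add_zero, zero_add]
  abel

lemma blk_one : blk (1 : H₀ →L[ℂ] H₀) (0 : H₁ →L[ℂ] H₀) (0 : H₀ →L[ℂ] H₁) (1 : H₁ →L[ℂ] H₁)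
    = 1 := by
  simp only [blk, one_def, id_comp, comp_zero, zero_comp, add_zero, zero_add]
  exact decomp H₀ H₁

lemma adjoint_blk (A : H₀ →L[ℂ] H₀) (C : H₁ →L[ℂ] H₀) (B : H₀ →L[ℂ] H₁) (D : H₁ →L[ℂ] H₁) :
    adjoint (blk A C B D) = blk (adjoint A) (adjoint B) (adjoint C) (adjoint D) := by
  simp only [blk, map_add, adjoint_comp, adj_inl0, adj_inr1, adj_fst0, adj_snd1, comp_assoc]
  abel

/-- `Δ`, the orthogonal projection of `H₀ ⊕ H₁` onto `H₁`. -/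
def projR : WithLp 2 (H₀ × H₁) →L[ℂ] WithLp 2 (H₀ × H₁) :=
  inr1 H₀ H₁ ∘L snd1 H₀ H₁

/-- The series product `F₁ ◁ F₂ = F₁ + F₂ + F₁ Δ F₂` on `B(H₀ ⊕ H₁)`. -/
def seriesProd (F₁ F₂ : WithLp 2 (H₀ × H₁) →L[ℂ] WithLp 2 (H₀ × H₁)) :
    WithLp 2 (H₀ × H₁) →L[ℂ] WithLp 2 (H₀ × H₁) :=
  F₁ + F₂ + F₁ * projR * F₂

/-- `F_{Z,L,W} = [[Z - ½L*L, -L*W], [L, W - 1]]`. -/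
def FZLW (Z : H₀ →L[ℂ] H₀) (L : H₀ →L[ℂ] H₁) (W : H₁ →L[ℂ] H₁) :
    WithLp 2 (H₀ × H₁) →L[ℂ] WithLp 2 (H₀ × H₁) :=
  blk (Z - (2 : ℂ)⁻¹ • (adjoint L ∘L L)) (-(adjoint L ∘L W)) L (W - 1)

/-- The inverse square root `(1 + S)^{-1/2}` of `1 + S` for a positive operator `S`,
given by applying `x ↦ (1 + x)^{-1/2}` to `S` via the continuous functional calculus. -/
def invSqrtOnePlus {K : Type*} [NormedAddCommGroup K] [InnerProductSpace ℂ K] [CompleteSpace K]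
    (S : K →L[ℂ] K) : K →L[ℂ] K :=
  cfc (fun x : ℝ => (1 + x) ^ (-(1 / 2 : ℝ))) S


section CFCfacts
variable {K : Type*} [NormedAddCommGroup K] [InnerProductSpace ℂ K] [CompleteSpace K]

lemma isSelfAdjoint_invSqrtOnePlus (S : K →L[ℂ] K) : IsSelfAdjoint (invSqrtOnePlus S) :=
  cfc_predicate _ _

lemma contOn_invSqrt {S : K →L[ℂ] K} (hS : 0 ≤ S) :
    ContinuousOn (fun x : ℝ => (1 + x) ^ (-(1 / 2 : ℝ))) (spectrum ℝ S) := by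
  apply ContinuousOn.rpow_const (by fun_prop)
  intro x hx
  have := spectrum_nonneg_of_nonneg hS hx
  exact Or.inl (by linarith)

lemma contOn_inv {S : K →L[ℂ] K} (hS : 0 ≤ S) :
    ContinuousOn (fun x : ℝ => (1 + x)⁻¹) (spectrum ℝ S) := by
  apply ContinuousOn.inv₀ (by fun_prop)
  intro x hx
  have := spectrum_nonneg_of_nonneg hS hx
  positivity

lemma invSqrt_sq {S : K →L[ℂ] K} (hS : 0 ≤ S) :
    invSqrtOnePlus S * invSqrtOnePlus S = cfc (fun x : ℝ => (1 + x)⁻¹) S := by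
  rw [invSqrtOnePlus, ← cfc_mul _ _ S (contOn_invSqrt hS) (contOn_invSqrt hS)]
  apply cfc_congr
  intro x hx
  have h1 : (0:ℝ) < 1 + x := by linarith [spectrum_nonneg_of_nonneg hS hx]
  show (1 + x) ^ (-(1/2:ℝ)) * (1 + x) ^ (-(1/2:ℝ)) = (1 + x)⁻¹
  rw [← Real.rpow_add h1]
  norm_num
  rw [Real.rpow_neg_one]

lemma one_add_eq_cfc {S : K →L[ℂ] K} (hS : 0 ≤ S) :
    (1 : K →L[ℂ] K) + S = cfc (fun x : ℝ => 1 + x) S := by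
  have hsa : IsSelfAdjoint S := ((ContinuousLinearMap.nonneg_iff_isPositive S).mp hS).isSelfAdjoint
  have he : (fun x : ℝ => 1 + x) = (fun x : ℝ => 1 + _root_.id x) := rfl
  rw [he, cfc_const_add 1 _root_.id S (by fun_prop), cfc_id ℝ S]
  simp [Algebra.algebraMap_eq_smul_one]

lemma invSqrt_sq_mul {S : K →L[ℂ] K} (hS : 0 ≤ S) :
    invSqrtOnePlus S * invSqrtOnePlus S * (1 + S) = 1 := by
  rw [invSqrt_sq hS, one_add_eq_cfc hS, ← cfc_mul _ _ S (contOn_inv hS) (by fun_prop)]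
  rw [← cfc_const_one ℝ S]
  apply cfc_congr
  intro x hx
  have h1 : (0:ℝ) < 1 + x := by linarith [spectrum_nonneg_of_nonneg hS hx]
  field_simp

lemma mul_invSqrt_sq {S : K →L[ℂ] K} (hS : 0 ≤ S) :
    (1 + S) * (invSqrtOnePlus S * invSqrtOnePlus S) = 1 := by
  rw [invSqrt_sq hS, one_add_eq_cfc hS, ← cfc_mul _ _ S (by fun_prop) (contOn_inv hS)]
  rw [← cfc_const_one ℝ S]
  apply cfc_congr
  intro x hx
  have h1 : (0:ℝ) < 1 + x := by linarith [spectrum_nonneg_of_nonneg hS hx]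
  field_simp

lemma invSqrt_comm {S : K →L[ℂ] K} (hS : 0 ≤ S) :
    invSqrtOnePlus S * S = S * invSqrtOnePlus S := by
  have hsa : IsSelfAdjoint S := ((ContinuousLinearMap.nonneg_iff_isPositive S).mp hS).isSelfAdjoint
  have h2 := (cfc_id ℝ S hsa).symm
  rw [invSqrtOnePlus]
  nth_rewrite 2 [h2]
  nth_rewrite 3 [h2]
  rw [← cfc_mul _ _ S (contOn_invSqrt hS) (by fun_prop),
    ← cfc_mul _ _ S (by fun_prop) (contOn_invSqrt hS)]
  exact cfc_congr fun x _ => mul_comm _ _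

end CFCfacts

lemma nonneg_adjoint_comp (L : H₀ →L[ℂ] H₁) : 0 ≤ adjoint L ∘L L := by
  rw [ContinuousLinearMap.nonneg_iff_isPositive]
  simpa [one_def] using (ContinuousLinearMap.isPositive_one (E := H₁)).adjoint_conj L

lemma nonneg_comp_adjoint (L : H₀ →L[ℂ] H₁) : 0 ≤ L ∘L adjoint L := by
  have := nonneg_adjoint_comp (adjoint L)
  rwa [adjoint_adjoint] at this

/-- The block operator `V_L`. -/
def VL (L : H₀ →L[ℂ] H₁) : WithLp 2 (H₀ × H₁) →L[ℂ] WithLp 2 (H₀ × H₁) :=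
  blk (invSqrtOnePlus (adjoint L ∘L L))
    (-(adjoint L ∘L invSqrtOnePlus (L ∘L adjoint L)))
    (L ∘L invSqrtOnePlus (adjoint L ∘L L))
    (invSqrtOnePlus (L ∘L adjoint L))

set_option maxHeartbeats 1000000 in
theorem VL_unitary (L : H₀ →L[ℂ] H₁) :
    adjoint (VL L) * VL L = 1 ∧ VL L * adjoint (VL L) = 1 := by
  set T : H₀ →L[ℂ] H₀ := adjoint L ∘L L with hTdef
  set T' : H₁ →L[ℂ] H₁ := L ∘L adjoint L with hT'def
  have hT : 0 ≤ T := nonneg_adjoint_comp L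
  have hT' : 0 ≤ T' := nonneg_comp_adjoint L
  set R : H₀ →L[ℂ] H₀ := invSqrtOnePlus T with hRdef
  set S : H₁ →L[ℂ] H₁ := invSqrtOnePlus T' with hSdef
  have hRsa : IsSelfAdjoint R := isSelfAdjoint_invSqrtOnePlus T
  have hSsa : IsSelfAdjoint S := isSelfAdjoint_invSqrtOnePlus T'
  have e2 : R * R + T * (R * R) = 1 := by
    have := mul_invSqrt_sq hT
    rwa [add_mul, one_mul, ← hRdef] at this
  have f2 : S * S + T' * (S * S) = 1 := by
    have := mul_invSqrt_sq hT'
    rwa [add_mul, one_mul, ← hSdef] at this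
  have e2' : R * R * T + R * R = 1 := by
    have := invSqrt_sq_mul hT
    rwa [mul_add, mul_one, ← hRdef, add_comm] at this
  have f2' : S * S * T' + S * S = 1 := by
    have := invSqrt_sq_mul hT'
    rwa [mul_add, mul_one, ← hSdef, add_comm] at this
  have cR : R * T = T * R := invSqrt_comm hT
  have cS : S * T' = T' * S := invSqrt_comm hT'
  -- intertwining
  have hcomm : L ∘L (1 + T) = (1 + T') ∘L L := by
    simp only [comp_add, add_comp, one_def, comp_id, id_comp, hTdef, hT'def, comp_assoc]
  have intertwine : L ∘L (R * R) = (S * S) ∘L L := by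
    calc L ∘L (R * R) = ((S * S) * (1 + T')) ∘L (L ∘L (R * R)) := by
          rw [show (S * S) * (1 + T') = 1 from by
            have := invSqrt_sq_mul hT'; rwa [← hSdef] at this]
          simp [one_def]
      _ = (S * S) ∘L (((1 + T') ∘L L) ∘L (R * R)) := by
          rw [mul_def ((S*S)) (1 + T'), comp_assoc, comp_assoc]
      _ = (S * S) ∘L ((L ∘L (1 + T)) ∘L (R * R)) := by rw [← hcomm]
      _ = (S * S) ∘L (L ∘L ((1 + T) * (R * R))) := by rw [comp_assoc, ← mul_def]
      _ = (S * S) ∘L L := by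
          rw [show (1 + T) * (R * R) = 1 from by
            have := mul_invSqrt_sq hT; rwa [← hRdef] at this]
          simp [one_def]
  have intertwine' : (R * R) ∘L adjoint L = adjoint L ∘L (S * S) := by
    have := congrArg adjoint intertwine
    rw [adjoint_comp, adjoint_comp] at this
    rw [show adjoint (R * R) = R * R from by
        rw [mul_def, adjoint_comp, hRsa.adjoint_eq, ← mul_def]] at this
    rw [show adjoint (S * S) = S * S from by
        rw [mul_def, adjoint_comp, hSsa.adjoint_eq, ← mul_def]] at this
    exact this
  -- adjoint of VL
  have hadjV : adjoint (VL L) = blk R (R ∘L adjoint L) (-(S ∘L L)) S := by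
    rw [VL, adjoint_blk, hRsa.adjoint_eq, hSsa.adjoint_eq, ← hRdef, ← hSdef]
    rw [adjoint_comp, hRsa.adjoint_eq, map_neg, adjoint_comp, hSsa.adjoint_eq, adjoint_adjoint]
  have hV : VL L = blk R (-(adjoint L ∘L S)) (L ∘L R) S := rfl
  constructor
  · rw [hadjV, hV, mul_def, blk_comp_blk]
    have E11 : R ∘L R + (R ∘L adjoint L) ∘L (L ∘L R) = 1 := by
      have h : (R ∘L adjoint L) ∘L (L ∘L R) = R * (T * R) := by
        rw [comp_assoc, ← comp_assoc (adjoint L), hTdef, mul_def, mul_def]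
      rw [h, show R * (T * R) = T * (R * R) from by rw [← mul_assoc, cR, mul_assoc]]
      exact e2
    have E12 : R ∘L (-(adjoint L ∘L S)) + (R ∘L adjoint L) ∘L S = 0 := by
      rw [comp_neg, comp_assoc]; abel
    have E21 : (-(S ∘L L)) ∘L R + S ∘L (L ∘L R) = 0 := by
      rw [neg_comp, comp_assoc]; abel
    have E22 : (-(S ∘L L)) ∘L (-(adjoint L ∘L S)) + S ∘L S = 1 := by
      rw [neg_comp, comp_neg, neg_neg]
      have h : (S ∘L L) ∘L (adjoint L ∘L S) = S * (T' * S) := by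
        rw [comp_assoc, ← comp_assoc L, hT'def, mul_def, mul_def]
      rw [h, show S * (T' * S) = T' * (S * S) from by rw [← mul_assoc, cS, mul_assoc]]
      rw [show S ∘L S = S * S from rfl, add_comm]
      exact f2
    rw [E11, E12, E21, E22, blk_one]
  · rw [hadjV, hV, mul_def, blk_comp_blk]
    have E11 : R ∘L R + (-(adjoint L ∘L S)) ∘L (-(S ∘L L)) = 1 := by
      rw [neg_comp, comp_neg, neg_neg]
      have h : (adjoint L ∘L S) ∘L (S ∘L L) = adjoint L ∘L ((S * S) ∘L L) := by
        rw [comp_assoc, ← comp_assoc S, mul_def]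
      rw [h, ← intertwine, ← comp_assoc]
      exact e2
    have E12 : R ∘L (R ∘L adjoint L) + (-(adjoint L ∘L S)) ∘L S = 0 := by
      rw [neg_comp, comp_assoc, ← comp_assoc R R, ← mul_def R R, intertwine', ← mul_def S S]
      abel
    have E21 : (L ∘L R) ∘L R + S ∘L (-(S ∘L L)) = 0 := by
      rw [comp_neg, comp_assoc, ← mul_def R R, ← comp_assoc S S, ← mul_def S S, intertwine]
      abel
    have E22 : (L ∘L R) ∘L (R ∘L adjoint L) + S ∘L S = 1 := by
      have h : (L ∘L R) ∘L (R ∘L adjoint L) = L ∘L ((R * R) ∘L adjoint L) := by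
        rw [comp_assoc, ← comp_assoc R, mul_def]
      rw [h, intertwine', ← comp_assoc, add_comm]
      exact f2
    rw [E11, E12, E21, E22, blk_one]
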